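/- arXiv:2203.10144 — 2 statements merged into one kernel-verified Lean document; each statement's English description precedes it below -/
import Mathlib

section
/- Let E be a real Hilbert space, f : E → ℝ differentiable with L-Lipschitz gradient (L > 0), 0 < η ≤ 1/L, and M ≥ 1. Let w^{r,0}, …, w^{r,M} and g^{r,0}, …, g^{r,M−1} be random vectors in E with w^{r,m+1} = w^{r,m} − η·g^{r,m}, such that for every m: E⟨∇f(w^{r,m}), g^{r,m}⟩ = E‖∇f(w^{r,m})‖², E‖g^{r,m} − ∇f(w^{r,m})‖² ≤ σ², and E‖g^{r,M−1}‖² ≤ 2(G² + σ²). Let w^{r+1,0} be any further random vector in E. Then Σ_{m=0}^{M−1} E‖∇f(w^{r,m})‖² ≤ (4/η)·E[f(w^{r,0}) − f(w^{r+1,0})] + 2MηLσ² + 2η²L²(G² + σ²) + (8/η² + 2L/η)·E‖w^{r+1,0} − w^{r,M}‖². -/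
open MeasureTheory
open scoped RealInnerProductSpace

lemma taylor_ub {E : Type*} [NormedAddCommGroup E] [InnerProductSpace ℝ E] [CompleteSpace E]
    (f : E → ℝ) (f' : E → E) (L : ℝ) (hL : 0 ≤ L)
    (hgrad : ∀ x, HasGradientAt f (f' x) x)
    (hlip : ∀ x y, ‖f' x - f' y‖ ≤ L * ‖x - y‖) (x y : E) :
    f y ≤ f x + ⟪f' x, y - x⟫ + L / 2 * ‖y - x‖ ^ 2 := by
  set v := y - x with hv
  have hcontf' : Continuous f' := by
    have : LipschitzWith (Real.toNNReal L) f' := by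
      apply LipschitzWith.of_dist_le_mul
      intro a b
      simp only [dist_eq_norm, Real.coe_toNNReal _ hL]
      exact hlip a b
    exact this.continuous
  have hline : ∀ t : ℝ, HasDerivAt (fun s : ℝ => f (x + s • v)) ⟪f' (x + t • v), v⟫ t := by
    intro t
    have h1 : HasDerivAt (fun s : ℝ => x + s • v) v t := by
      simpa using ((hasDerivAt_id t).smul_const v).const_add x
    have h2 := (hgrad (x + t • v)).hasFDerivAt
    have := h2.comp_hasDerivAt t h1
    simp only [InnerProductSpace.toDual_apply_apply] at this; exact this
  have hcont : Continuous (fun t : ℝ => ⟪f' (x + t • v), v⟫) := by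
    exact (hcontf'.comp (by continuity)).inner continuous_const
  have key : f y - f x = ∫ t in (0:ℝ)..1, ⟪f' (x + t • v), v⟫ := by
    have := intervalIntegral.integral_eq_sub_of_hasDerivAt
      (f := fun s : ℝ => f (x + s • v)) (f' := fun t => ⟪f' (x + t • v), v⟫)
      (a := 0) (b := 1) (fun t _ => hline t) (hcont.intervalIntegrable 0 1)
    rw [this]
    simp [hv]
  have hbound : ∫ t in (0:ℝ)..1, ⟪f' (x + t • v), v⟫ ≤
      ∫ t in (0:ℝ)..1, (⟪f' x, v⟫ + L * t * ‖v‖ ^ 2) := by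
    apply intervalIntegral.integral_mono_on (by norm_num) (hcont.intervalIntegrable 0 1)
      ((Continuous.intervalIntegrable (by continuity) 0 1))
    intro t ht
    rw [Set.mem_Icc] at ht
    have h1 : ⟪f' (x + t • v), v⟫ - ⟪f' x, v⟫ = ⟪f' (x + t • v) - f' x, v⟫ := by
      rw [inner_sub_left]
    have h2 : ⟪f' (x + t • v) - f' x, v⟫ ≤ ‖f' (x + t • v) - f' x‖ * ‖v‖ :=
      real_inner_le_norm _ _
    have h3 : ‖f' (x + t • v) - f' x‖ ≤ L * (t * ‖v‖) := by
      have := hlip (x + t • v) x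
      simpa [norm_smul, abs_of_nonneg ht.1, mul_assoc] using this
    nlinarith [norm_nonneg v, mul_le_mul_of_nonneg_right h3 (norm_nonneg v)]
  have hrhs : ∫ t in (0:ℝ)..1, (⟪f' x, v⟫ + L * t * ‖v‖ ^ 2) =
      ⟪f' x, v⟫ + L / 2 * ‖v‖ ^ 2 := by
    have heq : (fun t : ℝ => ⟪f' x, v⟫ + L * t * ‖v‖ ^ 2)
        = fun t : ℝ => ⟪f' x, v⟫ + (L * ‖v‖ ^ 2) * t := by
      funext t; ring
    rw [heq, intervalIntegral.integral_add intervalIntegrable_const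
      (Continuous.intervalIntegrable (by continuity) 0 1),
      intervalIntegral.integral_const_mul, integral_id]
    simp
    ring
  linarith [key ▸ le_trans (key ▸ hbound) (le_of_eq hrhs)]

lemma taylor_lb {E : Type*} [NormedAddCommGroup E] [InnerProductSpace ℝ E] [CompleteSpace E]
    (f : E → ℝ) (f' : E → E) (L : ℝ) (hL : 0 ≤ L)
    (hgrad : ∀ x, HasGradientAt f (f' x) x)
    (hlip : ∀ x y, ‖f' x - f' y‖ ≤ L * ‖x - y‖) (x y : E) :
    f x + ⟪f' x, y - x⟫ - L / 2 * ‖y - x‖ ^ 2 ≤ f y := by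
  have hgrad' : ∀ z, HasGradientAt (fun u => -f u) (-f' z) z := by
    intro z
    rw [hasGradientAt_iff_hasFDerivAt]
    have := (hgrad z).hasFDerivAt.neg
    rw [map_neg]
    exact this
  have hlip' : ∀ a b, ‖(-f' a) - (-f' b)‖ ≤ L * ‖a - b‖ := by
    intro a b
    have h : -f' a - -f' b = -(f' a - f' b) := by abel
    rw [h, norm_neg]
    exact hlip a b
  have := taylor_ub (fun u => -f u) (fun z => -f' z) L hL hgrad' hlip' x y
  simp only [inner_neg_left] at this
  linarith

set_option maxHeartbeats 1600000 in
/-- One round of `M` local stochastic gradient steps on an `L`-smooth function followed by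
an arbitrary server mixing step `w^{r+1,0}`:
`Σ_{m<M} E‖∇f(w^{r,m})‖² ≤ (4/η)·E[f(w^{r,0}) − f(w^{r+1,0})] + 2MηLσ²
  + 2η²L²(G²+σ²) + (8/η² + 2L/η)·E‖w^{r+1,0} − w^{r,M}‖²`. -/
theorem stmt_11 {E : Type*} [NormedAddCommGroup E] [InnerProductSpace ℝ E] [CompleteSpace E]
    {Ω : Type*} [MeasurableSpace Ω] (μ : Measure Ω) [IsProbabilityMeasure μ]
    (f : E → ℝ) (f' : E → E) (L η σ G : ℝ) (hL : 0 < L)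
    (hgrad : ∀ x, HasGradientAt f (f' x) x)
    (hlip : ∀ x y, ‖f' x - f' y‖ ≤ L * ‖x - y‖)
    (hη0 : 0 < η) (hη1 : η ≤ 1 / L)
    (M : ℕ) (hM : 1 ≤ M) (w : ℕ → Ω → E) (g : ℕ → Ω → E) (wnext : Ω → E)
    (hstep : ∀ m < M, ∀ ω, w (m + 1) ω = w m ω - η • g m ω)
    (hfI : ∀ m ≤ M, Integrable (fun ω => f (w m ω)) μ)
    (hfnextI : Integrable (fun ω => f (wnext ω)) μ)
    (hinnerI : ∀ m < M, Integrable (fun ω => ⟪f' (w m ω), g m ω⟫) μ)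
    (hgradI : ∀ m < M, Integrable (fun ω => ‖f' (w m ω)‖ ^ 2) μ)
    (hvarI : ∀ m < M, Integrable (fun ω => ‖g m ω - f' (w m ω)‖ ^ 2) μ)
    (hglastI : Integrable (fun ω => ‖g (M - 1) ω‖ ^ 2) μ)
    (hdispI : Integrable (fun ω => ‖wnext ω - w M ω‖ ^ 2) μ)
    (hunbiased : ∀ m < M,
      ∫ ω, ⟪f' (w m ω), g m ω⟫ ∂μ = ∫ ω, ‖f' (w m ω)‖ ^ 2 ∂μ)
    (hvar : ∀ m < M, ∫ ω, ‖g m ω - f' (w m ω)‖ ^ 2 ∂μ ≤ σ ^ 2)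
    (hglast : ∫ ω, ‖g (M - 1) ω‖ ^ 2 ∂μ ≤ 2 * (G ^ 2 + σ ^ 2)) :
    ∑ m ∈ Finset.range M, ∫ ω, ‖f' (w m ω)‖ ^ 2 ∂μ ≤
      (4 / η) * ∫ ω, (f (w 0 ω) - f (wnext ω)) ∂μ + 2 * M * η * L * σ ^ 2 +
        2 * η ^ 2 * L ^ 2 * (G ^ 2 + σ ^ 2) +
        (8 / η ^ 2 + 2 * L / η) * ∫ ω, ‖wnext ω - w M ω‖ ^ 2 ∂μ := by
  have hηL : η * L ≤ 1 := by
    rw [le_div_iff₀ hL] at hη1; exact hη1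
  have hm0 : M - 1 < M := by omega
  have hM0 : M - 1 + 1 = M := by omega
  -- integrability of ‖g m‖² for m < M
  have hgsq : ∀ m, (hm : m < M) → (fun ω => ‖g m ω‖ ^ 2)
      = fun ω => ‖g m ω - f' (w m ω)‖ ^ 2 + 2 * ⟪f' (w m ω), g m ω⟫ - ‖f' (w m ω)‖ ^ 2 := by
    intro m hm
    funext ω
    have h := norm_add_sq_real (g m ω - f' (w m ω)) (f' (w m ω))
    rw [sub_add_cancel] at h
    rw [h, inner_sub_left, real_inner_comm (g m ω) (f' (w m ω)),
      real_inner_self_eq_norm_sq]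
    ring
  have hgI : ∀ m < M, Integrable (fun ω => ‖g m ω‖ ^ 2) μ := by
    intro m hm
    rw [hgsq m hm]
    exact ((hvarI m hm).add ((hinnerI m hm).const_mul 2)).sub (hgradI m hm)
  have hgbound : ∀ m < M, ∫ ω, ‖g m ω‖ ^ 2 ∂μ ≤ σ ^ 2 + ∫ ω, ‖f' (w m ω)‖ ^ 2 ∂μ := by
    intro m hm
    have hI3 : Integrable (fun ω => 2 * ⟪f' (w m ω), g m ω⟫) μ :=
      (hinnerI m hm).const_mul 2
    have hI2 : Integrable (fun ω => ‖g m ω - f' (w m ω)‖ ^ 2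
        + 2 * ⟪f' (w m ω), g m ω⟫) μ := (hvarI m hm).add hI3
    have heq : ∫ ω, ‖g m ω‖ ^ 2 ∂μ = (∫ ω, ‖g m ω - f' (w m ω)‖ ^ 2 ∂μ)
        + 2 * (∫ ω, ⟪f' (w m ω), g m ω⟫ ∂μ) - ∫ ω, ‖f' (w m ω)‖ ^ 2 ∂μ := by
      rw [hgsq m hm, integral_sub hI2 (hgradI m hm),
        integral_add (hvarI m hm) hI3, integral_const_mul]
    rw [heq, hunbiased m hm]
    have := hvar m hm
    linarith
  -- per-step descent
  have step : ∀ m < M, η / 2 * (∫ ω, ‖f' (w m ω)‖ ^ 2 ∂μ) ≤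
      (∫ ω, f (w m ω) ∂μ) - (∫ ω, f (w (m + 1) ω) ∂μ) + L * η ^ 2 * σ ^ 2 / 2 := by
    intro m hm
    have hpt : ∀ ω, f (w (m + 1) ω) ≤ f (w m ω) - η * ⟪f' (w m ω), g m ω⟫
        + L * η ^ 2 / 2 * ‖g m ω‖ ^ 2 := by
      intro ω
      have h := taylor_ub f f' L hL.le hgrad hlip (w m ω) (w (m + 1) ω)
      rw [hstep m hm ω] at h
      have h1 : w m ω - η • g m ω - w m ω = -(η • g m ω) := by abel
      rw [h1] at h
      have e1 : ⟪f' (w m ω), -(η • g m ω)⟫ = -(η * ⟪f' (w m ω), g m ω⟫) := by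
        rw [inner_neg_right, real_inner_smul_right]
      have e2 : ‖-(η • g m ω)‖ ^ 2 = η ^ 2 * ‖g m ω‖ ^ 2 := by
        rw [norm_neg, norm_smul, Real.norm_eq_abs, mul_pow, sq_abs]
      rw [e1, e2] at h
      rw [hstep m hm ω]
      linarith
    have hIin : Integrable (fun ω => η * ⟪f' (w m ω), g m ω⟫) μ :=
      (hinnerI m hm).const_mul η
    have hIsub : Integrable (fun ω => f (w m ω) - η * ⟪f' (w m ω), g m ω⟫) μ :=
      (hfI m hm.le).sub hIin
    have hIg : Integrable (fun ω => L * η ^ 2 / 2 * ‖g m ω‖ ^ 2) μ :=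
      (hgI m hm).const_mul _
    have hRI : Integrable (fun ω => f (w m ω) - η * ⟪f' (w m ω), g m ω⟫
        + L * η ^ 2 / 2 * ‖g m ω‖ ^ 2) μ := hIsub.add hIg
    have hint := integral_mono (hfI (m + 1) hm) hRI hpt
    rw [integral_add hIsub hIg, integral_sub (hfI m hm.le) hIin,
      integral_const_mul, integral_const_mul, hunbiased m hm] at hint
    have hg := hgbound m hm
    have hA0 : (0:ℝ) ≤ ∫ ω, ‖f' (w m ω)‖ ^ 2 ∂μ := integral_nonneg fun ω => sq_nonneg _
    have hgsq0 : (0:ℝ) ≤ ∫ ω, ‖g m ω‖ ^ 2 ∂μ := integral_nonneg fun ω => sq_nonneg _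
    nlinarith [mul_le_mul_of_nonneg_left hg (by positivity : (0:ℝ) ≤ L * η ^ 2 / 2),
      mul_nonneg (sub_nonneg.mpr hηL)
        (mul_nonneg (by positivity : (0:ℝ) ≤ η / 2) hA0)]
  -- summed descent
  have hsum : η / 2 * (∑ m ∈ Finset.range M, ∫ ω, ‖f' (w m ω)‖ ^ 2 ∂μ) ≤
      (∫ ω, f (w 0 ω) ∂μ) - (∫ ω, f (w M ω) ∂μ) + M * (L * η ^ 2 * σ ^ 2 / 2) := by
    have key : ∀ m ∈ Finset.range M, η / 2 * (∫ ω, ‖f' (w m ω)‖ ^ 2 ∂μ) ≤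
        (∫ ω, f (w m ω) ∂μ) - (∫ ω, f (w (m + 1) ω) ∂μ) + L * η ^ 2 * σ ^ 2 / 2 :=
      fun m hm => step m (Finset.mem_range.mp hm)
    have h := Finset.sum_le_sum key
    rw [← Finset.mul_sum, Finset.sum_add_distrib,
      Finset.sum_range_sub' (fun m => ∫ ω, f (w m ω) ∂μ), Finset.sum_const,
      Finset.card_range, nsmul_eq_mul] at h
    exact h
  -- mixing step bound
  have hptB : ∀ ω, f (wnext ω) - f (w M ω) ≤ η / 4 * ‖f' (w (M - 1) ω)‖ ^ 2
      + η ^ 3 * L ^ 2 / 4 * ‖g (M - 1) ω‖ ^ 2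
      + (2 / η + L / 2) * ‖wnext ω - w M ω‖ ^ 2 := by
    intro ω
    have hlb := taylor_ub f f' L hL.le hgrad hlip (w M ω) (wnext ω)
    have hinner : ⟪f' (w M ω), wnext ω - w M ω⟫ ≤ ‖f' (w M ω)‖ * ‖wnext ω - w M ω‖ := by
      have h1 := abs_real_inner_le_norm (f' (w M ω)) (wnext ω - w M ω)
      have h2 := le_abs_self ⟪f' (w M ω), wnext ω - w M ω⟫
      linarith
    have hd : ‖f' (w M ω) - f' (w (M - 1) ω)‖ ≤ L * (η * ‖g (M - 1) ω‖) := by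
      have h := hlip (w M ω) (w (M - 1) ω)
      have hw : w M ω - w (M - 1) ω = -(η • g (M - 1) ω) := by
        conv_lhs => rw [← hM0, hstep (M - 1) hm0 ω]
        rw [Nat.add_sub_cancel, sub_sub_cancel_left]
      rw [hw, norm_neg, norm_smul, Real.norm_eq_abs, abs_of_pos hη0] at h
      exact h
    have hnorm : ‖f' (w M ω)‖ ≤ ‖f' (w (M - 1) ω)‖ + L * (η * ‖g (M - 1) ω‖) := by
      have heq : f' (w (M - 1) ω) + (f' (w M ω) - f' (w (M - 1) ω)) = f' (w M ω) := by abel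
      calc ‖f' (w M ω)‖ = ‖f' (w (M - 1) ω) + (f' (w M ω) - f' (w (M - 1) ω))‖ := by
            rw [heq]
        _ ≤ ‖f' (w (M - 1) ω)‖ + ‖f' (w M ω) - f' (w (M - 1) ω)‖ := norm_add_le _ _
        _ ≤ ‖f' (w (M - 1) ω)‖ + L * (η * ‖g (M - 1) ω‖) := by linarith
    have hgradM : ‖f' (w M ω)‖ ^ 2 ≤ 2 * ‖f' (w (M - 1) ω)‖ ^ 2
        + 2 * η ^ 2 * L ^ 2 * ‖g (M - 1) ω‖ ^ 2 := by
      nlinarith [norm_nonneg (f' (w M ω)), norm_nonneg (f' (w (M - 1) ω)),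
        norm_nonneg (g (M - 1) ω),
        sq_nonneg (‖f' (w (M - 1) ω)‖ - L * (η * ‖g (M - 1) ω‖))]
    have hyoung : ‖f' (w M ω)‖ * ‖wnext ω - w M ω‖ ≤
        η / 8 * ‖f' (w M ω)‖ ^ 2 + 2 / η * ‖wnext ω - w M ω‖ ^ 2 := by
      have h' : η * (‖f' (w M ω)‖ * ‖wnext ω - w M ω‖) ≤
          η ^ 2 / 8 * ‖f' (w M ω)‖ ^ 2 + 2 * ‖wnext ω - w M ω‖ ^ 2 := by
        nlinarith [sq_nonneg (η * ‖f' (w M ω)‖ - 4 * ‖wnext ω - w M ω‖)]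
      have h2 : ‖f' (w M ω)‖ * ‖wnext ω - w M ω‖ ≤
          (η ^ 2 / 8 * ‖f' (w M ω)‖ ^ 2 + 2 * ‖wnext ω - w M ω‖ ^ 2) / η := by
        rw [le_div_iff₀ hη0]
        nlinarith [h']
      have h3 : (η ^ 2 / 8 * ‖f' (w M ω)‖ ^ 2 + 2 * ‖wnext ω - w M ω‖ ^ 2) / η =
          η / 8 * ‖f' (w M ω)‖ ^ 2 + 2 / η * ‖wnext ω - w M ω‖ ^ 2 := by
        field_simp
      linarith [h3 ▸ h2]
    have hmul := mul_le_mul_of_nonneg_left hgradM (by positivity : (0:ℝ) ≤ η / 8)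
    have e3 : η / 8 * (2 * ‖f' (w (M - 1) ω)‖ ^ 2 + 2 * η ^ 2 * L ^ 2 * ‖g (M - 1) ω‖ ^ 2)
        = η / 4 * ‖f' (w (M - 1) ω)‖ ^ 2 + η ^ 3 * L ^ 2 / 4 * ‖g (M - 1) ω‖ ^ 2 := by
      ring
    linarith [hlb, hinner, hyoung, hmul, e3]
  have hI4 : Integrable (fun ω => η / 4 * ‖f' (w (M - 1) ω)‖ ^ 2) μ :=
    (hgradI (M - 1) hm0).const_mul _
  have hI5 : Integrable (fun ω => η ^ 3 * L ^ 2 / 4 * ‖g (M - 1) ω‖ ^ 2) μ :=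
    hglastI.const_mul _
  have hI6 : Integrable (fun ω => (2 / η + L / 2) * ‖wnext ω - w M ω‖ ^ 2) μ :=
    hdispI.const_mul _
  have hI45 : Integrable (fun ω => η / 4 * ‖f' (w (M - 1) ω)‖ ^ 2
      + η ^ 3 * L ^ 2 / 4 * ‖g (M - 1) ω‖ ^ 2) μ := hI4.add hI5
  have hBI : Integrable (fun ω => η / 4 * ‖f' (w (M - 1) ω)‖ ^ 2
      + η ^ 3 * L ^ 2 / 4 * ‖g (M - 1) ω‖ ^ 2
      + (2 / η + L / 2) * ‖wnext ω - w M ω‖ ^ 2) μ := hI45.add hI6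
  have hDiffI : Integrable (fun ω => f (wnext ω) - f (w M ω)) μ :=
    hfnextI.sub (hfI M le_rfl)
  have hB := integral_mono hDiffI hBI hptB
  rw [integral_sub hfnextI (hfI M le_rfl), integral_add hI45 hI6,
    integral_add hI4 hI5, integral_const_mul, integral_const_mul,
    integral_const_mul] at hB
  -- combine
  have hAm0 : (∫ ω, ‖f' (w (M - 1) ω)‖ ^ 2 ∂μ) ≤
      ∑ m ∈ Finset.range M, ∫ ω, ‖f' (w m ω)‖ ^ 2 ∂μ :=
    Finset.single_le_sum (f := fun m => ∫ ω, ‖f' (w m ω)‖ ^ 2 ∂μ)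
      (fun i _ => integral_nonneg fun ω => sq_nonneg _)
      (Finset.mem_range.mpr hm0)
  have hD0 : (0:ℝ) ≤ ∫ ω, ‖wnext ω - w M ω‖ ^ 2 ∂μ := integral_nonneg fun ω => sq_nonneg _
  have hglast' : η ^ 3 * L ^ 2 / 4 * (∫ ω, ‖g (M - 1) ω‖ ^ 2 ∂μ) ≤
      η ^ 3 * L ^ 2 / 4 * (2 * (G ^ 2 + σ ^ 2)) :=
    mul_le_mul_of_nonneg_left hglast (by positivity)
  have hsplit : ∫ ω, (f (w 0 ω) - f (wnext ω)) ∂μ =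
      (∫ ω, f (w 0 ω) ∂μ) - ∫ ω, f (wnext ω) ∂μ :=
    integral_sub (hfI 0 (by omega)) hfnextI
  rw [hsplit]
  set S := ∑ m ∈ Finset.range M, ∫ ω, ‖f' (w m ω)‖ ^ 2 ∂μ with hS
  have hAm0S := mul_le_mul_of_nonneg_left hAm0 (by positivity : (0:ℝ) ≤ η / 4)
  have hfinal : η / 4 * S ≤ ((∫ ω, f (w 0 ω) ∂μ) - ∫ ω, f (wnext ω) ∂μ)
      + M * (L * η ^ 2 * σ ^ 2 / 2) + η ^ 3 * L ^ 2 / 2 * (G ^ 2 + σ ^ 2)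
      + (2 / η + L / 2) * ∫ ω, ‖wnext ω - w M ω‖ ^ 2 ∂μ := by
    linarith
  calc S = 4 / η * (η / 4 * S) := by field_simp
    _ ≤ 4 / η * (((∫ ω, f (w 0 ω) ∂μ) - ∫ ω, f (wnext ω) ∂μ)
        + M * (L * η ^ 2 * σ ^ 2 / 2) + η ^ 3 * L ^ 2 / 2 * (G ^ 2 + σ ^ 2)
        + (2 / η + L / 2) * ∫ ω, ‖wnext ω - w M ω‖ ^ 2 ∂μ) :=
      mul_le_mul_of_nonneg_left hfinal (by positivity)
    _ = 4 / η * ((∫ ω, f (w 0 ω) ∂μ) - ∫ ω, f (wnext ω) ∂μ) + 2 * M * η * L * σ ^ 2 +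
        2 * η ^ 2 * L ^ 2 * (G ^ 2 + σ ^ 2) +
        (8 / η ^ 2 + 2 * L / η) * ∫ ω, ‖wnext ω - w M ω‖ ^ 2 ∂μ := by
      field_simp
      ring
end

section
/- Let E be a real Hilbert space, f_k : E → ℝ differentiable with L-Lipschitz gradient (L > 0), 0 < η ≤ 1/L, K ≥ 2, M ≥ 1, R ≥ 1, and λ ∈ [1/K, 1]. Consider SoftPull iterates for client k on a probability space: random vectors w^{r,m}_k with local steps w^{r,m+1}_k = w^{r,m}_k − η·g^{r,m}_k (0 ≤ m ≤ M−1) and mixing w^{r+1,0}_k = λ·w^{r,M}_k + ((1−λ)/(K−1))·Σ_{k'≠k} w^{r,M}_{k'}, where for every r, m: E⟨∇f_k(w^{r,m}_k), g^{r,m}_k⟩ = E‖∇f_k(w^{r,m}_k)‖², E‖g^{r,m}_k − ∇f_k(w^{r,m}_k)‖² ≤ σ², and E‖g^{r,m}_k‖² ≤ 2(G² + σ²). Then (1/(RM))·Σ_{r=0}^{R−1} Σ_{m=0}^{M−1} E‖∇f_k(w^{r,m}_k)‖² ≤ (4/(ηRM))·E[f_k(w^{0,0}_k) − f_k(w^{R,0}_k)]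 + 2ηLσ² + 2η²L²(G² + σ²)/M + (1/(RM))·(8/η² + 2L/η)·((1−λ)²K²/(K−1)²)·Σ_{r=0}^{R−1} E‖w^{r,M}_k − w̄^{r,M}‖², where w̄^{r,M} = (1/K)·Σ_{k'=1}^K w^{r,M}_{k'}. -/
open MeasureTheory
open scoped RealInnerProductSpace

lemma descent_lemma' {E : Type*} [NormedAddCommGroup E] [InnerProductSpace ℝ E] [CompleteSpace E]
    (f : E → ℝ) (f' : E → E) (L : ℝ)
    (hgrad : ∀ x, HasGradientAt f (f' x) x)
    (hlip : ∀ x y, ‖f' x - f' y‖ ≤ L * ‖x - y‖) (x y : E) :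
    f y ≤ f x + ⟪f' x, y - x⟫ + L / 2 * ‖y - x‖ ^ 2 := by
  set v := y - x with hv
  have hcurve : ∀ t : ℝ, HasDerivAt (fun t : ℝ => f (x + t • v)) ⟪f' (x + t • v), v⟫ t := by
    intro t
    have hc : HasDerivAt (fun t : ℝ => x + t • v) v t := by
      simpa using ((hasDerivAt_id t).smul_const v).const_add x
    have h := (hgrad (x + t • v)).hasFDerivAt.comp_hasDerivAt t hc
    simpa [InnerProductSpace.toDual_apply_apply, Function.comp_def] using h
  set φ : ℝ → ℝ := fun t => f (x + t • v) - t * ⟪f' x, v⟫ - t ^ 2 * (L / 2 * ‖v‖ ^ 2) with hφ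
  have hφd : ∀ t : ℝ, HasDerivAt φ
      (⟪f' (x + t • v), v⟫ - ⟪f' x, v⟫ - t * (L * ‖v‖ ^ 2)) t := by
    intro t
    have h2 : HasDerivAt (fun t : ℝ => t * ⟪f' x, v⟫) ⟪f' x, v⟫ t := by
      simpa using (hasDerivAt_id t).mul_const ⟪f' x, v⟫
    have h3 : HasDerivAt (fun t : ℝ => t ^ 2 * (L / 2 * ‖v‖ ^ 2))
        (2 * t * (L / 2 * ‖v‖ ^ 2)) t := by
      simpa using (hasDerivAt_pow 2 t).mul_const (L / 2 * ‖v‖ ^ 2)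
    have heq : ⟪f' (x + t • v), v⟫ - ⟪f' x, v⟫ - t * (L * ‖v‖ ^ 2)
        = ⟪f' (x + t • v), v⟫ - ⟪f' x, v⟫ - 2 * t * (L / 2 * ‖v‖ ^ 2) := by ring
    rw [heq]
    exact ((hcurve t).sub h2).sub h3
  have hdiff : Differentiable ℝ φ := fun t => (hφd t).differentiableAt
  have hanti : AntitoneOn φ (Set.Icc (0:ℝ) 1) := by
    apply antitoneOn_of_deriv_nonpos (convex_Icc 0 1) hdiff.continuous.continuousOn
      hdiff.differentiableOn
    intro t ht
    rw [interior_Icc] at ht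
    rw [(hφd t).deriv]
    have h1 : ⟪f' (x + t • v), v⟫ - ⟪f' x, v⟫ = ⟪f' (x + t • v) - f' x, v⟫ := by
      rw [inner_sub_left]
    have h2 : ⟪f' (x + t • v) - f' x, v⟫ ≤ ‖f' (x + t • v) - f' x‖ * ‖v‖ :=
      real_inner_le_norm _ _
    have h3 : ‖f' (x + t • v) - f' x‖ ≤ L * (t * ‖v‖) := by
      have := hlip (x + t • v) x
      simpa [norm_smul, abs_of_pos ht.1] using this
    have h4 : ‖f' (x + t • v) - f' x‖ * ‖v‖ ≤ L * (t * ‖v‖) * ‖v‖ :=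
      mul_le_mul_of_nonneg_right h3 (norm_nonneg _)
    nlinarith [norm_nonneg v]
  have h01 : φ 1 ≤ φ 0 := hanti (Set.mem_Icc.mpr ⟨le_refl 0, zero_le_one⟩)
    (Set.mem_Icc.mpr ⟨zero_le_one, le_refl 1⟩) zero_le_one
  have e1 : φ 1 = f y - ⟪f' x, v⟫ - L / 2 * ‖v‖ ^ 2 := by simp [hφ, hv]
  have e0 : φ 0 = f x := by simp [hφ]
  rw [e1, e0] at h01
  linarith

set_option maxHeartbeats 1000000 in
/-- SoftPull bound for client `k` over `R` rounds of `M` local stochastic gradient steps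
followed by the SoftPull mixing with parameter `λ ∈ [1/K, 1]`:
`(1/(RM))·Σ_{r<R} Σ_{m<M} E‖∇f_k(w^{r,m}_k)‖² ≤ (4/(ηRM))·E[f_k(w^{0,0}_k) − f_k(w^{R,0}_k)]
  + 2ηLσ² + 2η²L²(G²+σ²)/M
  + (1/(RM))·(8/η² + 2L/η)·((1−λ)²K²/(K−1)²)·Σ_{r<R} E‖w^{r,M}_k − w̄^{r,M}‖²`. -/
theorem stmt_12 {E : Type*} [NormedAddCommGroup E] [InnerProductSpace ℝ E] [CompleteSpace E]
    {Ω : Type*} [MeasurableSpace Ω] (μ : Measure Ω) [IsProbabilityMeasure μ]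
    (K M R : ℕ) (hK : 2 ≤ K) (hM : 1 ≤ M) (hR : 1 ≤ R)
    (lam L η σ G : ℝ) (hL : 0 < L) (hη0 : 0 < η) (hη1 : η ≤ 1 / L)
    (hlam0 : 1 / (K : ℝ) ≤ lam) (hlam1 : lam ≤ 1)
    (f : E → ℝ) (f' : E → E)
    (hgrad : ∀ x, HasGradientAt f (f' x) x)
    (hlip : ∀ x y, ‖f' x - f' y‖ ≤ L * ‖x - y‖)
    (k : Fin K) (w : ℕ → ℕ → Fin K → Ω → E) (g : ℕ → ℕ → Ω → E)
    (hlocal : ∀ r, ∀ m < M, ∀ ω, w r (m + 1) k ω = w r m k ω - η • g r m ω)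
    (hmix : ∀ r ω, w (r + 1) 0 k ω =
      lam • w r M k ω +
        ((1 - lam) / ((K : ℝ) - 1)) • ∑ k' ∈ Finset.univ.erase k, w r M k' ω)
    (hfI : ∀ r m, Integrable (fun ω => f (w r m k ω)) μ)
    (hinnerI : ∀ r m, Integrable (fun ω => ⟪f' (w r m k ω), g r m ω⟫) μ)
    (hgradI : ∀ r m, Integrable (fun ω => ‖f' (w r m k ω)‖ ^ 2) μ)
    (hvarI : ∀ r m, Integrable (fun ω => ‖g r m ω - f' (w r m k ω)‖ ^ 2) μ)
    (hgI : ∀ r m, Integrable (fun ω => ‖g r m ω‖ ^ 2) μ)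
    (hdevI : ∀ r, Integrable
      (fun ω => ‖w r M k ω - (1 / (K : ℝ)) • ∑ k', w r M k' ω‖ ^ 2) μ)
    (hunbiased : ∀ r m,
      ∫ ω, ⟪f' (w r m k ω), g r m ω⟫ ∂μ = ∫ ω, ‖f' (w r m k ω)‖ ^ 2 ∂μ)
    (hvar : ∀ r m, ∫ ω, ‖g r m ω - f' (w r m k ω)‖ ^ 2 ∂μ ≤ σ ^ 2)
    (hg2 : ∀ r m, ∫ ω, ‖g r m ω‖ ^ 2 ∂μ ≤ 2 * (G ^ 2 + σ ^ 2)) :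
    (1 / ((R : ℝ) * M)) * ∑ r ∈ Finset.range R, ∑ m ∈ Finset.range M,
        ∫ ω, ‖f' (w r m k ω)‖ ^ 2 ∂μ ≤
      (4 / (η * R * M)) * ∫ ω, (f (w 0 0 k ω) - f (w R 0 k ω)) ∂μ +
        2 * η * L * σ ^ 2 + 2 * η ^ 2 * L ^ 2 * (G ^ 2 + σ ^ 2) / M +
        (1 / ((R : ℝ) * M)) * (8 / η ^ 2 + 2 * L / η) *
          ((1 - lam) ^ 2 * (K : ℝ) ^ 2 / ((K : ℝ) - 1) ^ 2) *
          ∑ r ∈ Finset.range R,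
            ∫ ω, ‖w r M k ω - (1 / (K : ℝ)) • ∑ k', w r M k' ω‖ ^ 2 ∂μ := by
  have hK2 : (2:ℝ) ≤ (K:ℝ) := by exact_mod_cast hK
  have hK0 : (0:ℝ) < (K:ℝ) := by linarith
  have hK1 : (0:ℝ) < (K:ℝ) - 1 := by linarith
  have hM0 : (0:ℝ) < (M:ℝ) := by exact_mod_cast Nat.lt_of_lt_of_le Nat.zero_lt_one hM
  have hR0 : (0:ℝ) < (R:ℝ) := by exact_mod_cast Nat.lt_of_lt_of_le Nat.zero_lt_one hR
  have hLη : L * η ≤ 1 := by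
    rw [le_div_iff₀ hL] at hη1; linarith
  have descent := descent_lemma' f f' L hgrad hlip
  have hA0 : ∀ r m, (0:ℝ) ≤ ∫ ω, ‖f' (w r m k ω)‖ ^ 2 ∂μ := fun r m =>
    integral_nonneg fun ω => sq_nonneg _
  have hD0 : ∀ r, (0:ℝ) ≤ ∫ ω, ‖w r M k ω - (1 / (K : ℝ)) • ∑ k', w r M k' ω‖ ^ 2 ∂μ :=
    fun r => integral_nonneg fun ω => sq_nonneg _
  -- second moment identity
  have hg2A : ∀ r m, ∫ ω, ‖g r m ω‖ ^ 2 ∂μ ≤ σ ^ 2 + ∫ ω, ‖f' (w r m k ω)‖ ^ 2 ∂μ := by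
    intro r m
    have hpt : ∀ ω, ‖g r m ω‖ ^ 2 =
        ‖g r m ω - f' (w r m k ω)‖ ^ 2 + 2 * ⟪f' (w r m k ω), g r m ω⟫
          - ‖f' (w r m k ω)‖ ^ 2 := by
      intro ω
      have h1 := norm_sub_sq_real (g r m ω) (f' (w r m k ω))
      have h2 := real_inner_comm (g r m ω) (f' (w r m k ω))
      linarith
    calc ∫ ω, ‖g r m ω‖ ^ 2 ∂μ
        = ∫ ω, (‖g r m ω - f' (w r m k ω)‖ ^ 2 + 2 * ⟪f' (w r m k ω), g r m ω⟫
            - ‖f' (w r m k ω)‖ ^ 2) ∂μ := integral_congr_ae (.of_forall hpt)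
      _ = (∫ ω, ‖g r m ω - f' (w r m k ω)‖ ^ 2 ∂μ)
            + 2 * (∫ ω, ⟪f' (w r m k ω), g r m ω⟫ ∂μ)
            - ∫ ω, ‖f' (w r m k ω)‖ ^ 2 ∂μ := by
          have hI1 : Integrable (fun ω => ‖g r m ω - f' (w r m k ω)‖ ^ 2
              + 2 * ⟪f' (w r m k ω), g r m ω⟫) μ :=
            (hvarI r m).add ((hinnerI r m).const_mul 2)
          rw [integral_sub hI1 (hgradI r m),
            integral_add (hvarI r m) ((hinnerI r m).const_mul 2), integral_const_mul]
      _ ≤ σ ^ 2 + ∫ ω, ‖f' (w r m k ω)‖ ^ 2 ∂μ := by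
          rw [hunbiased r m]; linarith [hvar r m]
  -- one local step
  have step1 : ∀ r, ∀ m < M,
      (∫ ω, f (w r (m+1) k ω) ∂μ) + (η/2) * ∫ ω, ‖f' (w r m k ω)‖ ^ 2 ∂μ ≤
        (∫ ω, f (w r m k ω) ∂μ) + L * η ^ 2 * σ ^ 2 / 2 := by
    intro r m hm
    have hpt : (fun ω => f (w r (m+1) k ω)) ≤ fun ω =>
        f (w r m k ω) - η * ⟪f' (w r m k ω), g r m ω⟫ + L * η ^ 2 / 2 * ‖g r m ω‖ ^ 2 := by
      intro ω
      have hd := descent (w r m k ω) (w r (m+1) k ω)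
      have h1 : w r (m+1) k ω - w r m k ω = (-η) • g r m ω := by
        rw [hlocal r m hm ω]; module
      rw [h1, real_inner_smul_right, norm_smul] at hd
      have h2 : ‖(-η : ℝ)‖ = η := by
        rw [Real.norm_eq_abs, abs_neg, abs_of_pos hη0]
      rw [h2] at hd
      have h3 : L / 2 * (η * ‖g r m ω‖) ^ 2 = L * η ^ 2 / 2 * ‖g r m ω‖ ^ 2 := by ring
      rw [h3] at hd
      linarith
    have hIrhs : Integrable (fun ω =>
        f (w r m k ω) - η * ⟪f' (w r m k ω), g r m ω⟫
          + L * η ^ 2 / 2 * ‖g r m ω‖ ^ 2) μ :=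
      ((hfI r m).sub ((hinnerI r m).const_mul η)).add ((hgI r m).const_mul (L * η ^ 2 / 2))
    have hint := integral_mono (hfI r (m+1)) hIrhs hpt
    have hI1 : Integrable (fun ω => f (w r m k ω)
        - η * ⟪f' (w r m k ω), g r m ω⟫) μ :=
      (hfI r m).sub ((hinnerI r m).const_mul η)
    rw [integral_add hI1 ((hgI r m).const_mul (L * η ^ 2 / 2)),
      integral_sub (hfI r m) ((hinnerI r m).const_mul η),
      integral_const_mul, integral_const_mul, hunbiased r m] at hint
    have hJ := hg2A r m
    have hJ' : L * η ^ 2 / 2 * (∫ ω, ‖g r m ω‖ ^ 2 ∂μ)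
        ≤ L * η ^ 2 / 2 * (σ ^ 2 + ∫ ω, ‖f' (w r m k ω)‖ ^ 2 ∂μ) :=
      mul_le_mul_of_nonneg_left hJ (by positivity)
    have habs : (L * η - 1) * ((η / 2) * ∫ ω, ‖f' (w r m k ω)‖ ^ 2 ∂μ) ≤ 0 :=
      mul_nonpos_of_nonpos_of_nonneg (by linarith)
        (mul_nonneg (by positivity) (hA0 r m))
    nlinarith [hint, hJ', habs]
  -- telescoping over local steps
  have step2 : ∀ r, ∀ n ≤ M,
      (∫ ω, f (w r n k ω) ∂μ) + (η/2) * ∑ m ∈ Finset.range n,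
          ∫ ω, ‖f' (w r m k ω)‖ ^ 2 ∂μ ≤
        (∫ ω, f (w r 0 k ω) ∂μ) + (n:ℝ) * (L * η ^ 2 * σ ^ 2 / 2) := by
    intro r n
    induction n with
    | zero => simp
    | succ n ih =>
      intro hn
      have hn' : n < M := hn
      have h1 := step1 r n hn'
      have h2 := ih (le_of_lt hn')
      rw [Finset.sum_range_succ]
      push_cast
      ring_nf
      ring_nf at h1 h2
      linarith
  -- mixing identity
  have hsub : ∀ r ω, w (r+1) 0 k ω = w r M k ω +
      (((1 - lam) * K / ((K:ℝ) - 1)) •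
        ((1 / (K:ℝ)) • (∑ k', w r M k' ω) - w r M k ω)) := by
    intro r ω
    have hS : ∑ k' ∈ Finset.univ.erase k, w r M k' ω
        = (∑ k', w r M k' ω) - w r M k ω :=
      Finset.sum_erase_eq_sub (Finset.mem_univ k)
    rw [hmix r ω, hS]
    match_scalars
    · field_simp; ring
    · field_simp
  -- mixing step
  have step3 : ∀ r, (∫ ω, f (w (r+1) 0 k ω) ∂μ) ≤ (∫ ω, f (w r M k ω) ∂μ)
      + (η/4) * (∫ ω, ‖f' (w r (M-1) k ω)‖ ^ 2 ∂μ)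
      + (η ^ 3 * L ^ 2 / 2) * (G ^ 2 + σ ^ 2)
      + (2/η + L/2) * ((1 - lam) ^ 2 * (K:ℝ) ^ 2 / ((K:ℝ) - 1) ^ 2) *
          ∫ ω, ‖w r M k ω - (1 / (K : ℝ)) • ∑ k', w r M k' ω‖ ^ 2 ∂μ := by
    intro r
    have hMm : M - 1 + 1 = M := Nat.succ_pred_eq_of_pos hM
    have hν0 : 0 ≤ (1 - lam) * K / ((K:ℝ) - 1) := by
      apply div_nonneg (mul_nonneg (by linarith) hK0.le) hK1.le
    have hpt : (fun ω => f (w (r+1) 0 k ω)) ≤ fun ω =>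
        f (w r M k ω) + (η/4) * ‖f' (w r (M-1) k ω)‖ ^ 2
          + (η ^ 3 * L ^ 2 / 4) * ‖g r (M-1) ω‖ ^ 2
          + ((2/η + L/2) * ((1 - lam) ^ 2 * (K:ℝ) ^ 2 / ((K:ℝ) - 1) ^ 2)) *
              ‖w r M k ω - (1 / (K : ℝ)) • ∑ k', w r M k' ω‖ ^ 2 := by
      intro ω
      set ν : ℝ := (1 - lam) * K / ((K:ℝ) - 1) with hνdef
      set x : E := w r M k ω with hxdef
      set b : E := (1 / (K:ℝ)) • (∑ k', w r M k' ω) with hbdef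
      have hy : w (r+1) 0 k ω = x + ν • (b - x) := hsub r ω
      have hd := descent x (w (r+1) 0 k ω)
      rw [hy, add_sub_cancel_left, real_inner_smul_right, norm_smul,
        Real.norm_eq_abs, abs_of_nonneg hν0] at hd
      -- gradient shift
      have hx' : x = w r (M-1) k ω - η • g r (M-1) ω := by
        have h := hlocal r (M-1) (by omega) ω
        rw [hMm] at h
        exact h
      have hgb : ‖f' x‖ ≤ ‖f' (w r (M-1) k ω)‖ + L * (η * ‖g r (M-1) ω‖) := by
        have h1 := hlip x (w r (M-1) k ω)
        have h2 : ‖x - w r (M-1) k ω‖ = η * ‖g r (M-1) ω‖ := by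
          rw [hx', sub_sub_cancel_left, norm_neg, norm_smul, Real.norm_eq_abs,
            abs_of_pos hη0]
        rw [h2] at h1
        have h3 := norm_sub_norm_le (f' x) (f' (w r (M-1) k ω))
        linarith
      have hsq : ‖f' x‖ ^ 2 ≤ 2 * ‖f' (w r (M-1) k ω)‖ ^ 2
          + 2 * L ^ 2 * η ^ 2 * ‖g r (M-1) ω‖ ^ 2 := by
        nlinarith [norm_nonneg (f' x), norm_nonneg (f' (w r (M-1) k ω)),
          norm_nonneg (g r (M-1) ω), hgb, hL.le, hη0.le,
          sq_nonneg (‖f' (w r (M-1) k ω)‖ - L * (η * ‖g r (M-1) ω‖)),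
          mul_nonneg hL.le (mul_nonneg hη0.le (norm_nonneg (g r (M-1) ω)))]
      -- AM-GM on inner product
      have hinner : ν * ⟪f' x, b - x⟫ ≤ (η/8) * ‖f' x‖ ^ 2 + (2/η) * ν ^ 2 * ‖b - x‖ ^ 2 := by
        have h1 : ν * ⟪f' x, b - x⟫ ≤ ν * (‖f' x‖ * ‖b - x‖) :=
          mul_le_mul_of_nonneg_left (real_inner_le_norm _ _) hν0
        have e1 : (η/8) * ‖f' x‖ ^ 2 + (2/η) * ν ^ 2 * ‖b - x‖ ^ 2
            - ν * (‖f' x‖ * ‖b - x‖)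
            = (η ^ 2 * ‖f' x‖ ^ 2 + 16 * ν ^ 2 * ‖b - x‖ ^ 2
                - 8 * η * (ν * (‖f' x‖ * ‖b - x‖))) / (8 * η) := by
          field_simp; ring
        have e3 : 0 ≤ η ^ 2 * ‖f' x‖ ^ 2 + 16 * ν ^ 2 * ‖b - x‖ ^ 2
            - 8 * η * (ν * (‖f' x‖ * ‖b - x‖)) := by
          nlinarith [sq_nonneg (η * ‖f' x‖ - 4 * (ν * ‖b - x‖))]
        have e4 : 0 ≤ (η ^ 2 * ‖f' x‖ ^ 2 + 16 * ν ^ 2 * ‖b - x‖ ^ 2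
            - 8 * η * (ν * (‖f' x‖ * ‖b - x‖))) / (8 * η) :=
          div_nonneg e3 (by positivity)
        linarith [e1 ▸ e4]
      have hν2 : ν ^ 2 = (1 - lam) ^ 2 * (K:ℝ) ^ 2 / ((K:ℝ) - 1) ^ 2 := by
        rw [hνdef, div_pow, mul_pow]
      have hnorm2 : ‖b - x‖ ^ 2 = ‖x - b‖ ^ 2 := by rw [norm_sub_rev]
      rw [hnorm2] at hinner
      have c1 : L / 2 * (ν * ‖b - x‖) ^ 2 = L / 2 * ν ^ 2 * ‖x - b‖ ^ 2 := by
        rw [mul_pow, hnorm2]; ring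
      rw [c1] at hd
      have h8 : (η/8) * ‖f' x‖ ^ 2 ≤ (η/4) * ‖f' (w r (M-1) k ω)‖ ^ 2
          + (η ^ 3 * L ^ 2 / 4) * ‖g r (M-1) ω‖ ^ 2 := by
        have := mul_le_mul_of_nonneg_left hsq (by positivity : (0:ℝ) ≤ η/8)
        nlinarith [this]
      simp only [← hxdef, ← hbdef, ← hν2, hy]
      linarith [hd, hinner, h8]
    have hIrhs : Integrable (fun ω =>
        f (w r M k ω) + (η/4) * ‖f' (w r (M-1) k ω)‖ ^ 2
          + (η ^ 3 * L ^ 2 / 4) * ‖g r (M-1) ω‖ ^ 2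
          + ((2/η + L/2) * ((1 - lam) ^ 2 * (K:ℝ) ^ 2 / ((K:ℝ) - 1) ^ 2)) *
              ‖w r M k ω - (1 / (K : ℝ)) • ∑ k', w r M k' ω‖ ^ 2) μ :=
      (((hfI r M).add ((hgradI r (M-1)).const_mul (η/4))).add
        ((hgI r (M-1)).const_mul (η ^ 3 * L ^ 2 / 4))).add
        ((hdevI r).const_mul _)
    have hint := integral_mono (hfI (r+1) 0) hIrhs hpt
    have hI1 : Integrable (fun ω => f (w r M k ω)
        + (η/4) * ‖f' (w r (M-1) k ω)‖ ^ 2) μ :=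
      (hfI r M).add ((hgradI r (M-1)).const_mul (η/4))
    have hI2 : Integrable (fun ω => f (w r M k ω)
        + (η/4) * ‖f' (w r (M-1) k ω)‖ ^ 2
        + (η ^ 3 * L ^ 2 / 4) * ‖g r (M-1) ω‖ ^ 2) μ :=
      hI1.add ((hgI r (M-1)).const_mul (η ^ 3 * L ^ 2 / 4))
    rw [integral_add hI2 ((hdevI r).const_mul _),
      integral_add hI1 ((hgI r (M-1)).const_mul (η ^ 3 * L ^ 2 / 4)),
      integral_add (hfI r M) ((hgradI r (M-1)).const_mul (η/4)),
      integral_const_mul, integral_const_mul, integral_const_mul] at hint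
    have hJ : (η ^ 3 * L ^ 2 / 4) * (∫ ω, ‖g r (M-1) ω‖ ^ 2 ∂μ)
        ≤ (η ^ 3 * L ^ 2 / 4) * (2 * (G ^ 2 + σ ^ 2)) :=
      mul_le_mul_of_nonneg_left (hg2 r (M-1)) (by positivity)
    linarith [hint, hJ]
  -- per round
  have step4 : ∀ r, (∫ ω, f (w (r+1) 0 k ω) ∂μ) + (η/4) * ∑ m ∈ Finset.range M,
      ∫ ω, ‖f' (w r m k ω)‖ ^ 2 ∂μ ≤ (∫ ω, f (w r 0 k ω) ∂μ)
      + ((M:ℝ) * (L * η ^ 2 * σ ^ 2 / 2) + (η ^ 3 * L ^ 2 / 2) * (G ^ 2 + σ ^ 2)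
        + (2/η + L/2) * ((1 - lam) ^ 2 * (K:ℝ) ^ 2 / ((K:ℝ) - 1) ^ 2) *
          ∫ ω, ‖w r M k ω - (1 / (K : ℝ)) • ∑ k', w r M k' ω‖ ^ 2 ∂μ) := by
    intro r
    have h2 := step2 r M le_rfl
    have h3 := step3 r
    have hterm : (∫ ω, ‖f' (w r (M-1) k ω)‖ ^ 2 ∂μ) ≤ ∑ m ∈ Finset.range M,
        ∫ ω, ‖f' (w r m k ω)‖ ^ 2 ∂μ :=
      Finset.single_le_sum (fun m _ => hA0 r m) (Finset.mem_range.mpr (by omega))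
    have hterm' : (η/4) * (∫ ω, ‖f' (w r (M-1) k ω)‖ ^ 2 ∂μ)
        ≤ (η/4) * ∑ m ∈ Finset.range M, ∫ ω, ‖f' (w r m k ω)‖ ^ 2 ∂μ :=
      mul_le_mul_of_nonneg_left hterm (by positivity)
    linarith
  -- telescope over rounds
  have step5 : ∀ n : ℕ, (∫ ω, f (w n 0 k ω) ∂μ)
      + (η/4) * ∑ r ∈ Finset.range n, ∑ m ∈ Finset.range M,
          ∫ ω, ‖f' (w r m k ω)‖ ^ 2 ∂μ
      ≤ (∫ ω, f (w 0 0 k ω) ∂μ)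
      + (n:ℝ) * ((M:ℝ) * (L * η ^ 2 * σ ^ 2 / 2) + (η ^ 3 * L ^ 2 / 2) * (G ^ 2 + σ ^ 2))
      + (2/η + L/2) * ((1 - lam) ^ 2 * (K:ℝ) ^ 2 / ((K:ℝ) - 1) ^ 2) *
          ∑ r ∈ Finset.range n,
            ∫ ω, ‖w r M k ω - (1 / (K : ℝ)) • ∑ k', w r M k' ω‖ ^ 2 ∂μ := by
    intro n
    induction n with
    | zero => simp
    | succ n ih =>
      rw [Finset.sum_range_succ, Finset.sum_range_succ]
      have h4 := step4 n
      push_cast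
      linarith
  -- final assembly
  have key := step5 R
  rw [integral_sub (hfI 0 0) (hfI R 0)]
  have hRM : (0:ℝ) < (R:ℝ) * (M:ℝ) := mul_pos hR0 hM0
  rw [one_div, inv_mul_le_iff₀ hRM]
  calc ∑ r ∈ Finset.range R, ∑ m ∈ Finset.range M, ∫ ω, ‖f' (w r m k ω)‖ ^ 2 ∂μ
      = (4/η) * ((η/4) * ∑ r ∈ Finset.range R, ∑ m ∈ Finset.range M,
          ∫ ω, ‖f' (w r m k ω)‖ ^ 2 ∂μ) := by
        field_simp
    _ ≤ (4/η) * (((∫ ω, f (w 0 0 k ω) ∂μ) - ∫ ω, f (w R 0 k ω) ∂μ)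
        + (R:ℝ) * ((M:ℝ) * (L * η ^ 2 * σ ^ 2 / 2)
            + (η ^ 3 * L ^ 2 / 2) * (G ^ 2 + σ ^ 2))
        + (2/η + L/2) * ((1 - lam) ^ 2 * (K:ℝ) ^ 2 / ((K:ℝ) - 1) ^ 2) *
            ∑ r ∈ Finset.range R,
              ∫ ω, ‖w r M k ω - (1 / (K : ℝ)) • ∑ k', w r M k' ω‖ ^ 2 ∂μ) := by
        apply mul_le_mul_of_nonneg_left (by linarith) (by positivity)
    _ = (R:ℝ) * (M:ℝ) *
        ((4 / (η * R * M)) * ((∫ ω, f (w 0 0 k ω) ∂μ) - ∫ ω, f (w R 0 k ω) ∂μ) +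
          2 * η * L * σ ^ 2 + 2 * η ^ 2 * L ^ 2 * (G ^ 2 + σ ^ 2) / M +
          ((R:ℝ) * M)⁻¹ * (8 / η ^ 2 + 2 * L / η) *
            ((1 - lam) ^ 2 * (K:ℝ) ^ 2 / ((K:ℝ) - 1) ^ 2) *
            ∑ r ∈ Finset.range R,
              ∫ ω, ‖w r M k ω - (1 / (K : ℝ)) • ∑ k', w r M k' ω‖ ^ 2 ∂μ) := by
        field_simp
        ring
end
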